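/- arXiv:2605.23476 — 2 statements merged into one kernel-verified Lean document; each statement's English description precedes it below -/
import Mathlib

section
/- Let H be a real symmetric n×n matrix, M a real diagonal n×n matrix with positive diagonal entries, η > 0, and J = I - η M⁻¹H. Then J is normal (J J^T = J^T J) if and only if H and M commute. -/
open Matrix

theorem stmt_1 {n : ℕ} (H : Matrix (Fin n) (Fin n) ℝ) (hH : H.IsSymm)
    (m : Fin n → ℝ) (hm : ∀ i, 0 < m i) (M : Matrix (Fin n) (Fin n) ℝ)
    (hM : M = Matrix.diagonal m) (η : ℝ) (hη : 0 < η)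
    (J : Matrix (Fin n) (Fin n) ℝ) (hJ : J = 1 - η • (M⁻¹ * H)) :
    J * Jᵀ = Jᵀ * J ↔ H * M = M * H := by
  have hm0 : ∀ i, m i ≠ 0 := fun i => (hm i).ne'
  set d : Fin n → ℝ := fun i => (m i)⁻¹ with hd
  have hMinv : M⁻¹ = Matrix.diagonal d := by
    apply Matrix.inv_eq_right_inv
    rw [hM, Matrix.diagonal_mul_diagonal,
      show (fun i => m i * d i) = (1 : Fin n → ℝ) from
        funext fun i => mul_inv_cancel₀ (hm0 i)]
    exact Matrix.diagonal_one
  have hHsymm : ∀ i j, H j i = H i j := by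
    intro i j
    conv_lhs => rw [← hH]
    rfl
  set A : Matrix (Fin n) (Fin n) ℝ := M⁻¹ * H with hA
  have hAT : Aᵀ = H * M⁻¹ := by
    rw [hA, Matrix.transpose_mul, hH.eq, hMinv, Matrix.diagonal_transpose]
  -- Step 1: reduce normality of J to normality of A
  have key : J * Jᵀ - Jᵀ * J = (η * η) • (A * Aᵀ - Aᵀ * A) := by
    rw [hJ]
    simp only [Matrix.transpose_sub, Matrix.transpose_smul, Matrix.transpose_one,
      sub_mul, mul_sub, Matrix.smul_mul, Matrix.mul_smul, smul_smul, smul_sub,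
      Matrix.one_mul, Matrix.mul_one]
    abel
  have step1 : (J * Jᵀ = Jᵀ * J) ↔ A * Aᵀ = Aᵀ * A := by
    rw [← sub_eq_zero, key, smul_eq_zero, sub_eq_zero]
    have : η * η ≠ 0 := by positivity
    simp [this]
  rw [step1]
  -- entrywise descriptions
  have hAAT : ∀ i j, (A * Aᵀ) i j = d i * (∑ k, H i k * H k j) * d j := by
    intro i j
    have h1 : A * Aᵀ = Matrix.diagonal d * (H * H) * Matrix.diagonal d := by
      rw [hAT, hA, hMinv]
      simp only [Matrix.mul_assoc]
    rw [h1, Matrix.mul_diagonal, Matrix.diagonal_mul, Matrix.mul_apply]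
  have hATA : ∀ i j, (Aᵀ * A) i j = ∑ k, H i k * (d k * d k) * H k j := by
    intro i j
    have h1 : Aᵀ * A = H * (Matrix.diagonal d * Matrix.diagonal d) * H := by
      rw [hAT, hA, hMinv]
      simp only [Matrix.mul_assoc]
    rw [h1, Matrix.diagonal_mul_diagonal, Matrix.mul_apply]
    apply Finset.sum_congr rfl
    intro k _
    rw [Matrix.mul_diagonal]
  constructor
  · -- forward: normal ⇒ commute
    intro hnorm
    have diag : ∀ i, ∑ k, H i k * H i k * (d k * d k)
        = d i * d i * ∑ k, H i k * H i k := by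
      intro i
      have h := congrFun (congrFun hnorm i) i
      rw [hAAT, hATA] at h
      calc ∑ k, H i k * H i k * (d k * d k)
          = ∑ k, H i k * (d k * d k) * H k i := by
            apply Finset.sum_congr rfl; intro k _; rw [hHsymm i k]; ring
        _ = d i * (∑ k, H i k * H k i) * d i := h.symm
        _ = ∑ k, d i * (H i k * H k i) * d i := by
            rw [Finset.mul_sum, Finset.sum_mul]
        _ = d i * d i * ∑ k, H i k * H i k := by
            rw [Finset.mul_sum]
            apply Finset.sum_congr rfl; intro k _; rw [hHsymm i k]; ring
    set T : ℝ := ∑ i, ∑ k, H i k * H i k with hT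
    have e1 : ∀ i, ∑ k, m i * m i * (H i k * H i k * (d k * d k))
        = ∑ k, H i k * H i k := by
      intro i
      rw [← Finset.mul_sum, diag i]
      have h1 : m i * d i = 1 := mul_inv_cancel₀ (hm0 i)
      calc m i * m i * (d i * d i * ∑ k, H i k * H i k)
          = (m i * d i) * (m i * d i) * ∑ k, H i k * H i k := by ring
        _ = ∑ k, H i k * H i k := by rw [h1]; ring
    have eA : ∑ i, ∑ k, m i * m i * (H i k * H i k * (d k * d k)) = T := by
      apply Finset.sum_congr rfl; intro i _; exact e1 i
    have e2 : ∑ i, ∑ k, m k * m k * (H i k * H i k * (d i * d i)) = T := by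
      calc ∑ i, ∑ k, m k * m k * (H i k * H i k * (d i * d i))
          = ∑ k, ∑ i, m k * m k * (H i k * H i k * (d i * d i)) :=
            Finset.sum_comm
        _ = ∑ k, ∑ x, H k x * H k x := by
            apply Finset.sum_congr rfl
            intro k _
            calc ∑ x, m k * m k * (H x k * H x k * (d x * d x))
                = ∑ x, m k * m k * (H k x * H k x * (d x * d x)) := by
                  apply Finset.sum_congr rfl; intro x _; rw [hHsymm k x]
              _ = ∑ x, H k x * H k x := e1 k
        _ = T := by rw [hT]
    have twoh : ∑ i, ∑ k, 2 * (H i k * H i k) = 2 * T := by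
      rw [hT, Finset.mul_sum]
      apply Finset.sum_congr rfl
      intro i _
      rw [Finset.mul_sum]
    have hS : ∑ i, ∑ k, (H i k * H i k) * (m i * d k - m k * d i) ^ 2 = 0 := by
      have expand : ∀ i k : Fin n, (H i k * H i k) * (m i * d k - m k * d i) ^ 2
          = m i * m i * (H i k * H i k * (d k * d k))
            + m k * m k * (H i k * H i k * (d i * d i))
            - 2 * (H i k * H i k) := by
        intro i k
        have hab : (m i * d k) * (m k * d i) = 1 := by
          have h1 : m i * d i = 1 := mul_inv_cancel₀ (hm0 i)
          have h2 : m k * d k = 1 := mul_inv_cancel₀ (hm0 k)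
          calc (m i * d k) * (m k * d i) = (m i * d i) * (m k * d k) := by ring
            _ = 1 := by rw [h1, h2]; ring
        linear_combination (-2 * (H i k * H i k)) * hab
      calc ∑ i, ∑ k, (H i k * H i k) * (m i * d k - m k * d i) ^ 2
          = ∑ i, ∑ k, (m i * m i * (H i k * H i k * (d k * d k))
            + m k * m k * (H i k * H i k * (d i * d i))
            - 2 * (H i k * H i k)) := by
            apply Finset.sum_congr rfl; intro i _
            apply Finset.sum_congr rfl; intro k _
            exact expand i k
        _ = (∑ i, ∑ k, m i * m i * (H i k * H i k * (d k * d k)))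
            + (∑ i, ∑ k, m k * m k * (H i k * H i k * (d i * d i)))
            - ∑ i, ∑ k, 2 * (H i k * H i k) := by
            simp only [Finset.sum_add_distrib, Finset.sum_sub_distrib]
        _ = 0 := by rw [eA, e2, twoh]; ring
    have hterm : ∀ i k : Fin n,
        (0:ℝ) ≤ (H i k * H i k) * (m i * d k - m k * d i) ^ 2 := by
      intro i k
      have h0 : (0:ℝ) ≤ H i k * H i k := mul_self_nonneg _
      positivity
    have hzero : ∀ i k, (H i k * H i k) * (m i * d k - m k * d i) ^ 2 = 0 := by
      intro i k
      have h1 := (Finset.sum_eq_zero_iff_of_nonneg (fun i _ =>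
        Finset.sum_nonneg (fun k _ => hterm i k))).mp hS i (Finset.mem_univ i)
      exact (Finset.sum_eq_zero_iff_of_nonneg (fun k _ =>
        hterm i k)).mp h1 k (Finset.mem_univ k)
    have hkey : ∀ i k, H i k = 0 ∨ m i = m k := by
      intro i k
      rcases mul_eq_zero.mp (hzero i k) with h | h
      · exact Or.inl (mul_self_eq_zero.mp h)
      · right
        have h2 : m i * d k = m k * d i := by
          have h3 := pow_eq_zero_iff (n := 2) (by norm_num) |>.mp h
          linarith [sub_eq_zero.mp h3]
        simp only [hd] at h2
        have hi := hm0 i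
        have hk := hm0 k
        field_simp at h2
        have h4 : (m i - m k) * (m i + m k) = 0 := by linear_combination h2
        rcases mul_eq_zero.mp h4 with h5 | h5
        · linarith
        · linarith [hm i, hm k]
    ext i j
    rw [hM, Matrix.mul_diagonal, Matrix.diagonal_mul]
    rcases hkey i j with h | h
    · simp [h]
    · rw [h]; ring
  · -- reverse: commute ⇒ normal
    intro hcomm
    have hkey : ∀ i j, H i j ≠ 0 → m i = m j := by
      intro i j hne
      have h := congrFun (congrFun hcomm i) j
      simp only [hM, Matrix.mul_diagonal, Matrix.diagonal_mul] at h
      have h5 : H i j * (m j - m i) = 0 := by linear_combination h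
      rcases mul_eq_zero.mp h5 with h6 | h6
      · exact absurd h6 hne
      · linarith
    ext i j
    rw [hAAT, hATA, Finset.mul_sum, Finset.sum_mul]
    apply Finset.sum_congr rfl
    intro k _
    by_cases h1 : H i k = 0
    · simp [h1]
    by_cases h2 : H k j = 0
    · simp [h2]
    have e1 : m i = m k := hkey i k h1
    have e2 : m k = m j := hkey k j h2
    have hdi : d i = d k := by simp only [hd]; rw [e1]
    have hdj : d j = d k := by simp only [hd]; rw [e2]
    rw [hdi, hdj]
    ring
end

section
/- Let H be a real symmetric n×n matrix with some nonzero off-diagonal entry H_{ij} ≠ 0 (i ≠ j), and M a diagonal matrix with m_i ≠ m_j at those indices. Then for any η > 0, the operator J = I - η M⁻¹H is not normal. -/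
open Matrix

theorem stmt_3 {n : ℕ} (H : Matrix (Fin n) (Fin n) ℝ) (hH : H.IsSymm)
    (m : Fin n → ℝ) (hm : ∀ i, 0 < m i) (M : Matrix (Fin n) (Fin n) ℝ)
    (hM : M = Matrix.diagonal m)
    (i j : Fin n) (hij : i ≠ j) (hHij : H i j ≠ 0) (hmij : m i ≠ m j)
    (η : ℝ) (hη : 0 < η)
    (J : Matrix (Fin n) (Fin n) ℝ) (hJ : J = 1 - η • (M⁻¹ * H)) :
    J * Jᵀ ≠ Jᵀ * J := by
  classical
  set d : Fin n → ℝ := fun k => (m k)⁻¹ with hd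
  have hdpos : ∀ k, 0 < d k := fun k => inv_pos.2 (hm k)
  have hMinv : M⁻¹ = Matrix.diagonal d := by
    apply Matrix.inv_eq_right_inv
    rw [hM, Matrix.diagonal_mul_diagonal]
    convert Matrix.diagonal_one using 2
    funext k
    exact mul_inv_cancel₀ (hm k).ne'
  have hJapp : ∀ p k, J p k = (if p = k then (1:ℝ) else 0) - η * (d p * H p k) := by
    intro p k
    simp [hJ, hMinv, Matrix.sub_apply, Matrix.one_apply, Matrix.smul_apply,
      Matrix.diagonal_mul]
  set S : Finset (Fin n) := Finset.univ.filter (fun p => ∃ k, H p k ≠ 0 ∧ m k ≠ m p)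
    with hS
  have hiS : i ∈ S := by
    simp only [hS, Finset.mem_filter, Finset.mem_univ, true_and]
    exact ⟨j, hHij, Ne.symm hmij⟩
  obtain ⟨p, hpS, hpmin⟩ := S.exists_min_image m ⟨i, hiS⟩
  obtain ⟨k0, hk0H, hk0m⟩ := (Finset.mem_filter.1 hpS).2
  have hle : ∀ k, H p k ≠ 0 → m p ≤ m k := by
    intro k hk
    by_cases h : m k = m p
    · exact le_of_eq h.symm
    · apply hpmin
      simp only [hS, Finset.mem_filter, Finset.mem_univ, true_and]
      exact ⟨p, by rw [hH.apply p k]; exact hk, Ne.symm h⟩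
  intro heq
  have hentry := congrFun (congrFun heq p) p
  have h1 : (J * Jᵀ) p p = ∑ k, (J p k)^2 := by
    simp [Matrix.mul_apply, sq]
  have h2 : (Jᵀ * J) p p = ∑ k, (J k p)^2 := by
    simp [Matrix.mul_apply, sq]
  have key : (∑ k, (J p k)^2) - (∑ k, (J k p)^2)
      = ∑ k, η^2 * (H p k)^2 * ((d p)^2 - (d k)^2) := by
    rw [← Finset.sum_sub_distrib]
    apply Finset.sum_congr rfl
    intro k _
    by_cases hk : p = k
    · subst hk; ring
    · rw [hJapp p k, hJapp k p, if_neg hk, if_neg (Ne.symm hk), hH.apply p k]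
      ring
  have hpos : 0 < ∑ k, η^2 * (H p k)^2 * ((d p)^2 - (d k)^2) := by
    apply Finset.sum_pos'
    · intro k _
      by_cases hk : H p k = 0
      · simp [hk]
      · have h1 : d k ≤ d p := by
          have := hle k hk
          exact inv_anti₀ (hm p) this
        have h2 : (d k)^2 ≤ (d p)^2 := by
          have := (hdpos k).le
          nlinarith
        have : 0 ≤ η^2 * (H p k)^2 := by positivity
        nlinarith
    · refine ⟨k0, Finset.mem_univ _, ?_⟩
      have h1 : m p < m k0 := lt_of_le_of_ne (hle k0 hk0H) (Ne.symm hk0m)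
      have h2 : d k0 < d p := by
        exact inv_strictAnti₀ (hm p) h1
      have h3 : (d k0)^2 < (d p)^2 := by
        have := (hdpos k0).le
        nlinarith
      have h4 : 0 < η^2 * (H p k0)^2 := by positivity
      nlinarith
  rw [h1, h2] at hentry
  rw [hentry, sub_self] at key
  linarith [key ▸ hpos]
end
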